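/- In ℝ², each of the 7 edges of the polygonal chain (0,0)-(0,2)-(1/2, 2−√15/2)-(1,2)-(1,0)-(3/2, √15/2)-(2,0)-(2,2) has Euclidean length exactly 2, and every vertex of the chain lies in the square [0,2]×[0,2]. -/

import Mathlib

noncomputable def pt2 (a b : ℝ) : EuclideanSpace ℝ (Fin 2) := WithLp.toLp 2 ![a, b]

/-- The vertices of the path `P_{3,3}` produced by the MΛI-algorithm. -/
noncomputable def P33 : Fin 8 → EuclideanSpace ℝ (Fin 2) :=
  ![pt2 0 0, pt2 0 2, pt2 (1 / 2) (2 - Real.sqrt 15 / 2), pt2 1 2, pt2 1 0,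
    pt2 (3 / 2) (Real.sqrt 15 / 2), pt2 2 0, pt2 2 2]

lemma dist_pt2 (a b c d : ℝ) :
    dist (pt2 a b) (pt2 c d) = Real.sqrt ((a - c) ^ 2 + (b - d) ^ 2) := by
  rw [EuclideanSpace.dist_eq]
  congr 1
  simp [pt2, Fin.sum_univ_two, Real.dist_eq, sq_abs]

lemma sqrt15_sq : Real.sqrt 15 ^ 2 = 15 := Real.sq_sqrt (by norm_num)

lemma sqrt15_nonneg : (0:ℝ) ≤ Real.sqrt 15 := Real.sqrt_nonneg _

lemma sqrt15_le : Real.sqrt 15 ≤ 4 := by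
  nlinarith [sqrt15_sq, sqrt15_nonneg]

lemma sqrt_four : Real.sqrt 4 = 2 := by
  rw [show (4:ℝ) = 2^2 by norm_num, Real.sqrt_sq (by norm_num)]

lemma edge_len (a b c d : ℝ) (h : (a - c) ^ 2 + (b - d) ^ 2 = 4) :
    dist (pt2 a b) (pt2 c d) = 2 := by
  rw [dist_pt2, h, sqrt_four]

/-- Each of the 7 edges of the chain
`(0,0)-(0,2)-(1/2, 2−√15/2)-(1,2)-(1,0)-(3/2, √15/2)-(2,0)-(2,2)` has Euclidean length
exactly `2`, and every vertex lies in the square `[0,2] × [0,2]`. -/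
theorem stmt5 :
    (∀ i : Fin 7, dist (P33 i.castSucc) (P33 i.succ) = 2) ∧
    (∀ i : Fin 8, ∀ j : Fin 2, P33 i j ∈ Set.Icc (0 : ℝ) 2) := by
  constructor
  · intro i
    fin_cases i
    · exact edge_len 0 0 0 2 (by norm_num)
    · exact edge_len 0 2 (1/2) (2 - Real.sqrt 15 / 2) (by nlinarith [sqrt15_sq])
    · exact edge_len (1/2) (2 - Real.sqrt 15 / 2) 1 2 (by nlinarith [sqrt15_sq])
    · exact edge_len 1 2 1 0 (by norm_num)
    · exact edge_len 1 0 (3/2) (Real.sqrt 15 / 2) (by nlinarith [sqrt15_sq])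
    · exact edge_len (3/2) (Real.sqrt 15 / 2) 2 0 (by nlinarith [sqrt15_sq])
    · exact edge_len 2 0 2 2 (by norm_num)
  · intro i j
    have key : ∀ x : ℝ, 0 ≤ x → x ≤ 2 → x ∈ Set.Icc (0:ℝ) 2 := fun x h1 h2 => ⟨h1, h2⟩
    fin_cases i <;> fin_cases j
    · exact key 0 (by norm_num) (by norm_num)
    · exact key 0 (by norm_num) (by norm_num)
    · exact key 0 (by norm_num) (by norm_num)
    · exact key 2 (by norm_num) (by norm_num)
    · exact key (1/2) (by norm_num) (by norm_num)
    · exact key (2 - Real.sqrt 15 / 2) (by nlinarith [sqrt15_le]) (by nlinarith [sqrt15_nonneg])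
    · exact key 1 (by norm_num) (by norm_num)
    · exact key 2 (by norm_num) (by norm_num)
    · exact key 1 (by norm_num) (by norm_num)
    · exact key 0 (by norm_num) (by norm_num)
    · exact key (3/2) (by norm_num) (by norm_num)
    · exact key (Real.sqrt 15 / 2) (by nlinarith [sqrt15_nonneg]) (by nlinarith [sqrt15_le])
    · exact key 2 (by norm_num) (by norm_num)
    · exact key 0 (by norm_num) (by norm_num)
    · exact key 2 (by norm_num) (by norm_num)
    · exact key 2 (by norm_num) (by norm_num)
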